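/- For any partitions λ and μ, and any two finite sets of variables x = (x_1,…,x_N) and y = (y_1,…,y_M), the following polynomial identity holds: ∑_η ∑_{τ∈η−□} s_{λ/η}(x)·s_{μ/τ}(y) = ∑_η ∑_{α∈λ−□} s_{α/η}(x)·s_{μ/η}(y), where both outer sums run over all partitions η (only finitely many terms are nonzero). -/

import Mathlib

open scoped BigOperators

noncomputable section

/-- `AddBox lam mu` says that `mu` is obtained from `lam` by adding a single box,
i.e. `mu ∈ lam + □`, equivalently `lam ∈ mu − □`. -/
def AddBox (lam mu : YoungDiagram) : Prop :=
  lam.cells ⊆ mu.cells ∧ mu.card = lam.card + 1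

/-- The complete homogeneous symmetric polynomial `h_n` in the variables indexed by `σ`:
the sum of all monomials of degree `n`. -/
def hPoly (σ : Type) [Fintype σ] [DecidableEq σ] (n : ℕ) : MvPolynomial σ ℚ :=
  ∑ m : Sym σ n, ((m : Multiset σ).map MvPolynomial.X).prod

/-- `h_n`, extended by `0` to negative indices. -/
def hPolyZ (σ : Type) [Fintype σ] [DecidableEq σ] (n : ℤ) : MvPolynomial σ ℚ :=
  if 0 ≤ n then hPoly σ n.toNat else 0

/-- The skew Schur polynomial `s_{μ/ν}(x)` in the variables indexed by `σ`, via the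
Jacobi–Trudi determinant; it vanishes unless `ν ⊆ μ`, and `s_μ = s_{μ/∅}`. -/
def skewSchurPoly (σ : Type) [Fintype σ] [DecidableEq σ] (mu nu : YoungDiagram) :
    MvPolynomial σ ℚ :=
  Matrix.det fun i j : Fin (mu.card + nu.card) =>
    hPolyZ σ ((mu.rowLen i : ℤ) - (nu.rowLen j : ℤ) - (i.1 : ℤ) + (j.1 : ℤ))

/-- The one-box partition `□ = (1)` as a Young diagram. -/
def box : YoungDiagram := YoungDiagram.ofRowLens [1] (by decide)


open Finset Matrix

section Generic

variable {R : Type*} [CommRing R]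

/-- Generic Jacobi–Trudi matrix. -/
def JTmat (h : ℤ → R) (n : ℕ) (a b : ℕ → ℕ) : Matrix (Fin n) (Fin n) R :=
  fun i j => h ((a i.1 : ℤ) - (b j.1 : ℤ) - (i.1 : ℤ) + (j.1 : ℤ))

theorem sum_det_updateRow_eq {n : ℕ} (A B : Matrix (Fin n) (Fin n) R) :
    ∑ i : Fin n, (A.updateRow i (B i)).det
      = ∑ j : Fin n, (A.updateCol j (fun i => B i j)).det := by
  simp only [Matrix.det_apply]
  rw [Finset.sum_comm, Finset.sum_comm (s := univ) (t := univ)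
    (f := fun i₀ (σ : Equiv.Perm (Fin n)) => Equiv.Perm.sign σ •
      ∏ i, (A.updateCol i₀ (fun i => B i i₀)) (σ i) i)]
  refine Finset.sum_congr rfl fun σ _ => ?_
  rw [← Equiv.sum_comp σ (fun i₀ => Equiv.Perm.sign σ •
      ∏ i, (A.updateRow i₀ (B i₀)) (σ i) i)]
  refine Finset.sum_congr rfl fun j _ => ?_
  congr 1
  refine Finset.prod_congr rfl fun i _ => ?_
  rw [Matrix.updateRow_apply, Matrix.updateCol_apply]
  by_cases hij : i = j
  · subst hij; simp
  · rw [if_neg hij, if_neg (fun hc => hij (σ.injective hc))]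

theorem JTmat_det_succ (h : ℤ → R) (h0 : h 0 = 1) (hneg : ∀ z : ℤ, z < 0 → h z = 0)
    (n : ℕ) (a b : ℕ → ℕ) (ha : a n = 0) (hb : b n = 0) :
    (JTmat h (n + 1) a b).det = (JTmat h n a b).det := by
  have hz : ∀ j : Fin (n + 1), j ≠ Fin.last n → (JTmat h (n + 1) a b) (Fin.last n) j = 0 := by
    intro j hj
    apply hneg
    have hjn : (j : ℕ) < n := Fin.val_lt_last hj
    simp only [JTmat, Fin.val_last, ha]
    omega
  have hsub : (JTmat h (n + 1) a b).submatrix (Fin.last n).succAbove (Fin.last n).succAbove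
      = JTmat h n a b := by
    ext i j
    simp [Fin.succAbove_last, JTmat, Matrix.submatrix_apply]
  have hone : (JTmat h (n + 1) a b) (Fin.last n) (Fin.last n) = 1 := by
    have : ((a n : ℤ) - (b n : ℤ) - (n : ℤ) + (n : ℤ)) = 0 := by rw [ha, hb]; ring
    simp only [JTmat, Fin.val_last, this, h0]
  rw [Matrix.det_succ_row _ (Fin.last n),
    Finset.sum_eq_single (Fin.last n) (fun j _ hj => by rw [hz j hj]; ring) (by simp), hsub, hone]
  have : ((-1 : R)) ^ ((Fin.last n : ℕ) + (Fin.last n : ℕ)) = 1 := by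
    rw [Fin.val_last]
    exact (Even.add_self n).neg_one_pow
  rw [this, one_mul, one_mul]

theorem card_filter_val_lt {n m : ℕ} (hm : m ≤ n) :
    (univ.filter fun i : Fin n => (i : ℕ) < m).card = m := by
  have e : {i : Fin n // (i : ℕ) < m} ≃ Fin m :=
    { toFun := fun i => ⟨i.1.1, i.2⟩
      invFun := fun k => ⟨⟨k.1, lt_of_lt_of_le k.2 hm⟩, k.2⟩
      left_inv := fun i => rfl
      right_inv := fun k => rfl }
  have hc := Fintype.card_congr e
  rw [Fintype.card_fin, Fintype.card_subtype] at hc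
  exact hc

theorem JTmat_det_eq_zero (h : ℤ → R) (hneg : ∀ z : ℤ, z < 0 → h z = 0) {n : ℕ} {a b : ℕ → ℕ}
    (ha : Antitone a) (hb : Antitone b) {k : ℕ} (hk : k < n) (hab : a k < b k) :
    (JTmat h n a b).det = 0 := by
  rw [Matrix.det_apply]
  apply Finset.sum_eq_zero
  intro σ _
  have hex : ∃ i : Fin n, i.1 ≤ k ∧ k ≤ (σ i).1 := by
    by_contra hcon
    push_neg at hcon
    have hsub : (univ.filter fun i : Fin n => i.1 < k + 1).image σ
        ⊆ univ.filter fun i : Fin n => i.1 < k := by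
      intro x hx
      simp only [Finset.mem_image, mem_filter, mem_univ, true_and] at hx ⊢
      obtain ⟨i, hi, rfl⟩ := hx
      exact hcon i (by omega)
    have hcard := Finset.card_le_card hsub
    rw [Finset.card_image_of_injective _ σ.injective, card_filter_val_lt hk,
      card_filter_val_lt (le_of_lt hk)] at hcard
    omega
  obtain ⟨i, hik, hki⟩ := hex
  have hterm : (∏ i : Fin n, (JTmat h n a b) (σ i) i) = 0 := by
    refine Finset.prod_eq_zero (Finset.mem_univ i) ?_
    apply hneg
    have h1 : a (σ i).1 ≤ a k := ha hki
    have h2 : b k ≤ b i.1 := hb hik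
    omega
  rw [hterm, smul_zero]

end Generic

section HSpec

theorem hPolyZ_zero_eq_one (σ : Type) [Fintype σ] [DecidableEq σ] : hPolyZ σ 0 = 1 := by
  rw [hPolyZ, if_pos le_rfl]
  show hPoly σ (0 : ℤ).toNat = 1
  rw [Int.toNat_zero, hPoly, Fintype.sum_unique]
  show (Multiset.map MvPolynomial.X ((Sym.nil : Sym σ 0) : Multiset σ)).prod = 1
  simp

theorem hPolyZ_neg (σ : Type) [Fintype σ] [DecidableEq σ] :
    ∀ z : ℤ, z < 0 → hPolyZ σ z = 0 := by
  intro z hz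
  rw [hPolyZ, if_neg (by omega)]

end HSpec

section YD

open YoungDiagram

attribute [local instance] Classical.propDecidable

theorem rowLen_eq_zero_of_card_le {μ : YoungDiagram} {i : ℕ} (hi : μ.card ≤ i) :
    μ.rowLen i = 0 := by
  by_contra hne
  have h0 : (i, 0) ∈ μ := by rw [YoungDiagram.mem_iff_lt_rowLen]; omega
  have hcol : i < μ.colLen 0 := YoungDiagram.mem_iff_lt_colLen.mp h0
  have hcc : μ.colLen 0 ≤ μ.card := by
    rw [YoungDiagram.colLen_eq_card]
    apply Finset.card_le_card
    intro c hc
    rw [YoungDiagram.mem_col_iff] at hc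
    exact (YoungDiagram.mem_cells _).mpr hc.1
  omega

theorem rowLen_antitone (μ : YoungDiagram) : Antitone μ.rowLen :=
  fun _ _ hij => μ.rowLen_anti _ _ hij

theorem rowLen_eq_of {μ : YoungDiagram} {i m : ℕ} (H : ∀ k, (i, k) ∈ μ ↔ k < m) :
    μ.rowLen i = m := by
  rcases lt_trichotomy (μ.rowLen i) m with hlt | he | hgt
  · have := (H (μ.rowLen i)).2 hlt
    rw [YoungDiagram.mem_iff_lt_rowLen] at this
    omega
  · exact he
  · have := (H m).1 (YoungDiagram.mem_iff_lt_rowLen.mpr hgt)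
    omega

/-- Validity of adding a box to `τ` at the end of row `j`. -/
def validAdd (τ : YoungDiagram) (j : ℕ) : Prop := ∀ i, i < j → τ.rowLen j < τ.rowLen i

/-- Validity of removing the last box of row `j` of `η`. -/
def validRem (η : YoungDiagram) (j : ℕ) : Prop := η.rowLen (j + 1) < η.rowLen j

/-- Add a box at the end of row `j` (when valid). -/
def addBoxAt (τ : YoungDiagram) (j : ℕ) : YoungDiagram :=
  if h : validAdd τ j then
    { cells := insert (j, τ.rowLen j) τ.cells
      isLowerSet := by
        intro x y hle hx
        simp only [Finset.coe_insert, Set.mem_insert_iff, Finset.mem_coe] at hx ⊢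
        rcases hx with hx | hx
        · subst hx
          have h1 : y.1 ≤ j := hle.1
          have h2 : y.2 ≤ τ.rowLen j := hle.2
          by_cases hy : y = (j, τ.rowLen j)
          · exact Or.inl hy
          · right
            rw [YoungDiagram.mem_cells, show y = (y.1, y.2) from rfl,
              YoungDiagram.mem_iff_lt_rowLen]
            rcases Nat.lt_or_ge y.1 j with hlt | hge
            · exact lt_of_le_of_lt h2 (h y.1 hlt)
            · have hyj : y.1 = j := le_antisymm h1 hge
              rw [hyj]
              rcases Nat.lt_or_ge y.2 (τ.rowLen j) with h' | h'
              · exact h'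
              · exfalso; exact hy (Prod.ext hyj (le_antisymm h2 h'))
        · exact Or.inr ((YoungDiagram.mem_cells _).mpr
            (τ.isLowerSet hle ((YoungDiagram.mem_cells _).mp hx))) }
  else τ

/-- Remove the last box of row `j` (when valid). -/
def removeBoxAt (η : YoungDiagram) (j : ℕ) : YoungDiagram :=
  if h : validRem η j then
    { cells := η.cells.erase (j, η.rowLen j - 1)
      isLowerSet := by
        intro x y hle hx
        have hx' := Finset.mem_of_mem_erase (Finset.mem_coe.mp hx)
        have hxne : x ≠ (j, η.rowLen j - 1) := Finset.ne_of_mem_erase (Finset.mem_coe.mp hx)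
        have hy : y ∈ η := η.isLowerSet hle ((YoungDiagram.mem_cells _).mp hx')
        refine Finset.mem_coe.mpr (Finset.mem_erase.mpr ⟨?_, (YoungDiagram.mem_cells _).mpr hy⟩)
        intro hyc
        subst hyc
        have h1 : j ≤ x.1 := hle.1
        have h2 : η.rowLen j - 1 ≤ x.2 := hle.2
        have hxm : (x.1, x.2) ∈ η := by
          rw [YoungDiagram.mem_cells] at hx'; exact hx'
        rw [YoungDiagram.mem_iff_lt_rowLen] at hxm
        have hpos : 0 < η.rowLen j := lt_of_le_of_lt (Nat.zero_le _) h
        rcases Nat.lt_or_ge j x.1 with hlt | hge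
        · have : η.rowLen x.1 ≤ η.rowLen (j + 1) := η.rowLen_anti _ _ hlt
          have hj : η.rowLen (j + 1) < η.rowLen j := h
          omega
        · have hxj : x.1 = j := le_antisymm hge h1
          rw [hxj] at hxm
          exact hxne (Prod.ext hxj (by omega)) }
  else η

theorem cells_addBoxAt {τ : YoungDiagram} {j : ℕ} (h : validAdd τ j) :
    (addBoxAt τ j).cells = insert (j, τ.rowLen j) τ.cells := by
  rw [addBoxAt, dif_pos h]

theorem cells_removeBoxAt {η : YoungDiagram} {j : ℕ} (h : validRem η j) :
    (removeBoxAt η j).cells = η.cells.erase (j, η.rowLen j - 1) := by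
  rw [removeBoxAt, dif_pos h]

theorem mem_addBoxAt {τ : YoungDiagram} {j : ℕ} (h : validAdd τ j) (c : ℕ × ℕ) :
    c ∈ addBoxAt τ j ↔ c = (j, τ.rowLen j) ∨ c ∈ τ := by
  rw [← YoungDiagram.mem_cells, cells_addBoxAt h, Finset.mem_insert, YoungDiagram.mem_cells]

theorem mem_removeBoxAt {η : YoungDiagram} {j : ℕ} (h : validRem η j) (c : ℕ × ℕ) :
    c ∈ removeBoxAt η j ↔ c ≠ (j, η.rowLen j - 1) ∧ c ∈ η := by
  rw [← YoungDiagram.mem_cells, cells_removeBoxAt h, Finset.mem_erase, YoungDiagram.mem_cells]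

theorem rowLen_addBoxAt {τ : YoungDiagram} {j : ℕ} (h : validAdd τ j) (i : ℕ) :
    (addBoxAt τ j).rowLen i = if i = j then τ.rowLen j + 1 else τ.rowLen i := by
  apply rowLen_eq_of
  intro k
  rw [mem_addBoxAt h, Prod.ext_iff, YoungDiagram.mem_iff_lt_rowLen]
  by_cases hij : i = j
  · simp [hij]; omega
  · simp [hij]

theorem rowLen_removeBoxAt {η : YoungDiagram} {j : ℕ} (h : validRem η j) (i : ℕ) :
    (removeBoxAt η j).rowLen i = if i = j then η.rowLen j - 1 else η.rowLen i := by
  have hpos : 0 < η.rowLen j := lt_of_le_of_lt (Nat.zero_le _) h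
  apply rowLen_eq_of
  intro k
  rw [mem_removeBoxAt h]
  simp only [ne_eq, Prod.ext_iff, not_and, YoungDiagram.mem_iff_lt_rowLen]
  by_cases hij : i = j
  · simp [hij]; omega
  · simp [hij]

theorem card_addBoxAt {τ : YoungDiagram} {j : ℕ} (h : validAdd τ j) :
    (addBoxAt τ j).card = τ.card + 1 := by
  show (addBoxAt τ j).cells.card = τ.cells.card + 1
  rw [cells_addBoxAt h, Finset.card_insert_of_notMem]
  rw [YoungDiagram.mem_cells, YoungDiagram.mem_iff_lt_rowLen]
  omega

theorem card_removeBoxAt {η : YoungDiagram} {j : ℕ} (h : validRem η j) :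
    η.card = (removeBoxAt η j).card + 1 := by
  have hpos : 0 < η.rowLen j := lt_of_le_of_lt (Nat.zero_le _) h
  show η.cells.card = (removeBoxAt η j).cells.card + 1
  rw [cells_removeBoxAt h, Finset.card_erase_of_mem]
  · have : 0 < η.cells.card := by
      apply Finset.card_pos.mpr
      exact ⟨(j, η.rowLen j - 1), by rw [YoungDiagram.mem_cells, YoungDiagram.mem_iff_lt_rowLen]; omega⟩
    omega
  · rw [YoungDiagram.mem_cells, YoungDiagram.mem_iff_lt_rowLen]; omega

theorem validRem.lt_card {η : YoungDiagram} {j : ℕ} (h : validRem η j) : j < η.card := by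
  by_contra hc
  push_neg at hc
  have := rowLen_eq_zero_of_card_le hc
  have h' : validRem η j := h
  rw [validRem, this] at h'
  omega

theorem validAdd.le_card {τ : YoungDiagram} {j : ℕ} (h : validAdd τ j) : j ≤ τ.card := by
  rcases j with _ | j'
  · omega
  · have := h j' (Nat.lt_succ_self j')
    by_contra hc
    push_neg at hc
    have hz : τ.rowLen j' = 0 := rowLen_eq_zero_of_card_le (by omega)
    omega



theorem addBox_iff_validAdd {τ η : YoungDiagram} :
    AddBox τ η ↔ ∃ j, validAdd τ j ∧ η = addBoxAt τ j := by
  constructor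
  · rintro ⟨hsub, hcard⟩
    have hne : (η.cells \ τ.cells).card = 1 := by
      rw [Finset.card_sdiff_of_subset hsub]
      show η.card - τ.card = 1
      omega
    obtain ⟨c, hc⟩ := Finset.card_eq_one.mp hne
    have hcη : c ∈ η.cells ∧ c ∉ τ.cells :=
      Finset.mem_sdiff.mp (hc ▸ Finset.mem_singleton_self c)
    have hcells : η.cells = insert c τ.cells := by
      have h1 : τ.cells ∪ η.cells \ τ.cells = η.cells := Finset.union_sdiff_of_subset hsub
      rw [hc] at h1
      rw [← h1]
      ext x
      simp [or_comm]
    obtain ⟨j, x⟩ := c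
    have hmemη : ∀ d : ℕ × ℕ, d ∈ η ↔ d = (j, x) ∨ d ∈ τ := by
      intro d
      rw [← YoungDiagram.mem_cells, hcells, Finset.mem_insert, YoungDiagram.mem_cells]
    have hxge : τ.rowLen j ≤ x := by
      by_contra hlt
      push_neg at hlt
      exact hcη.2 ((YoungDiagram.mem_cells _).mpr (YoungDiagram.mem_iff_lt_rowLen.mpr hlt))
    have hxle : x ≤ τ.rowLen j := by
      by_contra hlt
      push_neg at hlt
      have hmem : (j, τ.rowLen j) ∈ η :=
        η.up_left_mem le_rfl (le_of_lt hlt) ((YoungDiagram.mem_cells _).mp hcη.1)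
      rcases (hmemη _).1 hmem with heq | hmemτ
      · have := (Prod.ext_iff.mp heq).2; omega
      · rw [YoungDiagram.mem_iff_lt_rowLen] at hmemτ; omega
    have hx : x = τ.rowLen j := le_antisymm hxle hxge
    subst hx
    have hv : validAdd τ j := by
      intro i hij
      have hmem : (i, τ.rowLen j) ∈ η :=
        η.up_left_mem (le_of_lt hij) le_rfl ((YoungDiagram.mem_cells _).mp hcη.1)
      rcases (hmemη _).1 hmem with heq | hmemτ
      · have := (Prod.ext_iff.mp heq).1; omega
      · rw [YoungDiagram.mem_iff_lt_rowLen] at hmemτ; exact hmemτ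
    refine ⟨j, hv, ?_⟩
    apply YoungDiagram.ext
    rw [cells_addBoxAt hv, hcells]
  · rintro ⟨j, hv, rfl⟩
    constructor
    · intro c hcmem
      rw [cells_addBoxAt hv]
      exact Finset.mem_insert_of_mem hcmem
    · exact card_addBoxAt hv

theorem validRem_addBoxAt {τ : YoungDiagram} {j : ℕ} (hv : validAdd τ j) :
    validRem (addBoxAt τ j) j := by
  have ha : τ.rowLen (j + 1) ≤ τ.rowLen j := τ.rowLen_anti _ _ (Nat.le_succ j)
  rw [validRem, rowLen_addBoxAt hv, rowLen_addBoxAt hv, if_pos rfl, if_neg (by omega)]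
  omega

theorem removeBoxAt_addBoxAt {τ : YoungDiagram} {j : ℕ} (hv : validAdd τ j) :
    removeBoxAt (addBoxAt τ j) j = τ := by
  apply YoungDiagram.ext
  rw [cells_removeBoxAt (validRem_addBoxAt hv), cells_addBoxAt hv,
    rowLen_addBoxAt hv, if_pos rfl]
  have : τ.rowLen j + 1 - 1 = τ.rowLen j := by omega
  rw [this, Finset.erase_insert]
  rw [YoungDiagram.mem_cells, YoungDiagram.mem_iff_lt_rowLen]
  omega

theorem validAdd_removeBoxAt {η : YoungDiagram} {j : ℕ} (hv : validRem η j) :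
    validAdd (removeBoxAt η j) j := by
  have hpos : 0 < η.rowLen j := lt_of_le_of_lt (Nat.zero_le _) hv
  intro i hij
  rw [rowLen_removeBoxAt hv, rowLen_removeBoxAt hv, if_pos rfl, if_neg (by omega)]
  have := η.rowLen_anti i j (le_of_lt hij)
  omega

theorem addBoxAt_removeBoxAt {η : YoungDiagram} {j : ℕ} (hv : validRem η j) :
    addBoxAt (removeBoxAt η j) j = η := by
  have hpos : 0 < η.rowLen j := lt_of_le_of_lt (Nat.zero_le _) hv
  apply YoungDiagram.ext
  rw [cells_addBoxAt (validAdd_removeBoxAt hv), cells_removeBoxAt hv,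
    rowLen_removeBoxAt hv, if_pos rfl, Finset.insert_erase]
  rw [YoungDiagram.mem_cells, YoungDiagram.mem_iff_lt_rowLen]
  omega

theorem addBox_iff_validRem {τ η : YoungDiagram} :
    AddBox τ η ↔ ∃ j, validRem η j ∧ τ = removeBoxAt η j := by
  rw [addBox_iff_validAdd]
  constructor
  · rintro ⟨j, hv, rfl⟩
    exact ⟨j, validRem_addBoxAt hv, (removeBoxAt_addBoxAt hv).symm⟩
  · rintro ⟨j, hv, rfl⟩
    exact ⟨j, validAdd_removeBoxAt hv, (addBoxAt_removeBoxAt hv).symm⟩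

theorem removeBoxAt_injOn (η : YoungDiagram) :
    Set.InjOn (removeBoxAt η) {j | validRem η j} := by
  intro j hj j' hj' heq
  by_contra hne
  have h1 := rowLen_removeBoxAt (hj : validRem η j) j
  have h2 := rowLen_removeBoxAt (hj' : validRem η j') j
  rw [heq] at h1
  rw [h1, if_pos rfl, if_neg hne] at h2
  have hpos : 0 < η.rowLen j := lt_of_le_of_lt (Nat.zero_le _) hj
  omega

theorem addBoxAt_injOn (τ : YoungDiagram) :
    Set.InjOn (addBoxAt τ) {j | validAdd τ j} := by
  intro j hj j' hj' heq
  by_contra hne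
  have h1 := rowLen_addBoxAt (hj : validAdd τ j) j
  have h2 := rowLen_addBoxAt (hj' : validAdd τ j') j
  rw [heq] at h1
  rw [h1, if_pos rfl, if_neg hne] at h2
  omega

theorem setOf_addBox_fst (η : YoungDiagram) :
    {τ : YoungDiagram | AddBox τ η} = removeBoxAt η '' {j | validRem η j} := by
  ext τ
  simp only [Set.mem_setOf_eq, Set.mem_image]
  rw [addBox_iff_validRem]
  constructor
  · rintro ⟨j, hv, rfl⟩; exact ⟨j, hv, rfl⟩
  · rintro ⟨j, hv, rfl⟩; exact ⟨j, hv, rfl⟩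

theorem setOf_addBox_snd (τ : YoungDiagram) :
    {η : YoungDiagram | AddBox τ η} = addBoxAt τ '' {j | validAdd τ j} := by
  ext η
  simp only [Set.mem_setOf_eq, Set.mem_image]
  rw [addBox_iff_validAdd]
  constructor
  · rintro ⟨j, hv, rfl⟩; exact ⟨j, hv, rfl⟩
  · rintro ⟨j, hv, rfl⟩; exact ⟨j, hv, rfl⟩

theorem finite_subdiagrams (s : Finset (ℕ × ℕ)) :
    {η : YoungDiagram | η.cells ⊆ s}.Finite := by
  apply Set.Finite.of_finite_image (f := YoungDiagram.cells)
  · apply Set.Finite.subset (s.powerset.finite_toSet)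
    rintro t ⟨η, hη, rfl⟩
    simpa [Finset.mem_powerset] using hη
  · intro x _ y _ hxy
    exact YoungDiagram.ext hxy

theorem finite_addBox_fst (η : YoungDiagram) : {τ : YoungDiagram | AddBox τ η}.Finite := by
  rw [setOf_addBox_fst]
  apply Set.Finite.image
  apply Set.Finite.subset (Set.finite_Iio η.card)
  intro j hj
  exact hj.lt_card

theorem finite_addBox_snd (τ : YoungDiagram) : {η : YoungDiagram | AddBox τ η}.Finite := by
  rw [setOf_addBox_snd]
  apply Set.Finite.image
  apply Set.Finite.subset (Set.finite_Iic τ.card)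
  intro j hj
  exact hj.le_card

end YD

section Skew

theorem skew_eq_JT (σ : Type) [Fintype σ] [DecidableEq σ] (μ ν : YoungDiagram) {n : ℕ}
    (hn : μ.card + ν.card ≤ n) :
    skewSchurPoly σ μ ν = (JTmat (hPolyZ σ) n μ.rowLen ν.rowLen).det := by
  induction n, hn using Nat.le_induction with
  | base => rfl
  | succ n hn ih =>
    rw [ih]
    exact (JTmat_det_succ _ (hPolyZ_zero_eq_one σ) (hPolyZ_neg σ) n _ _
      (rowLen_eq_zero_of_card_le (by omega)) (rowLen_eq_zero_of_card_le (by omega))).symm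

theorem skew_eq_zero_of_not_subset (σ : Type) [Fintype σ] [DecidableEq σ]
    {μ ν : YoungDiagram} (h : ¬ ν.cells ⊆ μ.cells) : skewSchurPoly σ μ ν = 0 := by
  obtain ⟨c, hcν, hcμ⟩ := Finset.not_subset.mp h
  obtain ⟨k, x⟩ := c
  rw [YoungDiagram.mem_cells, YoungDiagram.mem_iff_lt_rowLen] at hcν hcμ
  push_neg at hcμ
  have hk : k < μ.card + ν.card := by
    by_contra hc
    push_neg at hc
    have : ν.rowLen k = 0 := rowLen_eq_zero_of_card_le (by omega)
    omega
  rw [skew_eq_JT σ μ ν le_rfl]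
  exact JTmat_det_eq_zero _ (hPolyZ_neg σ) (rowLen_antitone μ) (rowLen_antitone ν) hk
    (by omega)

end Skew

section FinsumPlumbing

attribute [local instance] Classical.propDecidable

variable {M : Type*} [AddCommMonoid M]

theorem finsum_Prop_of_not {p : Prop} (h : ¬p) (f : p → M) : ∑ᶠ i, f i = 0 := by
  haveI : IsEmpty p := ⟨h⟩
  exact finsum_of_isEmpty f

theorem finsum_swap' {α β : Type*} (f : α → β → M) {S : Set α} {T : Set β}
    (hS : S.Finite) (hT : T.Finite) (hf : ∀ a b, f a b ≠ 0 → a ∈ S ∧ b ∈ T) :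
    ∑ᶠ a, ∑ᶠ b, f a b = ∑ᶠ b, ∑ᶠ a, f a b := by
  have h1 : ∀ a, (∑ᶠ b, f a b) = ∑ b ∈ hT.toFinset, f a b := by
    intro a
    apply finsum_eq_sum_of_support_subset
    intro b hb
    simp only [Finset.mem_coe, Set.Finite.mem_toFinset]
    exact (hf a b hb).2
  have h2 : ∀ b, (∑ᶠ a, f a b) = ∑ a ∈ hS.toFinset, f a b := by
    intro b
    apply finsum_eq_sum_of_support_subset
    intro a ha
    simp only [Finset.mem_coe, Set.Finite.mem_toFinset]
    exact (hf a b ha).1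
  calc ∑ᶠ a, ∑ᶠ b, f a b = ∑ a ∈ hS.toFinset, ∑ b ∈ hT.toFinset, f a b := by
        rw [finsum_eq_sum_of_support_subset]
        · exact Finset.sum_congr rfl fun a _ => h1 a
        · intro a ha
          simp only [Finset.mem_coe, Set.Finite.mem_toFinset]
          by_contra hc
          apply ha
          apply finsum_eq_zero_of_forall_eq_zero
          intro b
          by_contra hb
          exact hc (hf a b hb).1
    _ = ∑ b ∈ hT.toFinset, ∑ a ∈ hS.toFinset, f a b := Finset.sum_comm
    _ = ∑ᶠ b, ∑ᶠ a, f a b := by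
        rw [finsum_eq_sum_of_support_subset]
        · exact (Finset.sum_congr rfl fun b _ => (h2 b).symm)
        · intro b hb
          simp only [Finset.mem_coe, Set.Finite.mem_toFinset]
          by_contra hc
          apply hb
          apply finsum_eq_zero_of_forall_eq_zero
          intro a
          by_contra ha
          exact hc (hf a b ha).2

theorem finsum_cond_nat (p : ℕ → Prop) (g : ℕ → M) (n : ℕ) (hp : ∀ j, p j → j < n) :
    (∑ᶠ (j : ℕ) (_ : p j), g j) = ∑ j ∈ Finset.range n, if p j then g j else 0 := by
  have h1 : ∀ j : ℕ, (∑ᶠ _ : p j, g j) = if p j then g j else 0 := fun j => finsum_eq_if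
  rw [finsum_congr h1]
  apply finsum_eq_sum_of_support_subset
  intro j hj
  simp only [Function.mem_support] at hj
  simp only [Finset.mem_coe, Finset.mem_range]
  by_cases hpj : p j
  · exact hp j hpj
  · exact absurd (if_neg hpj) hj

theorem finsum_addBox_fst (η : YoungDiagram) (g : YoungDiagram → M) :
    (∑ᶠ (τ : YoungDiagram) (_ : AddBox τ η), g τ)
      = ∑ᶠ (j : ℕ) (_ : validRem η j), g (removeBoxAt η j) := by
  have h1 : (∑ᶠ (τ : YoungDiagram) (_ : AddBox τ η), g τ)
      = ∑ᶠ τ ∈ {τ : YoungDiagram | AddBox τ η}, g τ := rfl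
  rw [h1, setOf_addBox_fst, finsum_mem_image (removeBoxAt_injOn η)]
  rfl

theorem finsum_addBox_snd (τ : YoungDiagram) (g : YoungDiagram → M) :
    (∑ᶠ (η : YoungDiagram) (_ : AddBox τ η), g η)
      = ∑ᶠ (j : ℕ) (_ : validAdd τ j), g (addBoxAt τ j) := by
  have h1 : (∑ᶠ (η : YoungDiagram) (_ : AddBox τ η), g η)
      = ∑ᶠ η ∈ {η : YoungDiagram | AddBox τ η}, g η := rfl
  rw [h1, setOf_addBox_snd, finsum_mem_image (addBoxAt_injOn τ)]
  rfl

end FinsumPlumbing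


section Key

/-- The generic "B" matrix: the Jacobi–Trudi matrix with all `h`-indices lowered by one. -/
def JTmatB (h : ℤ → R') [CommRing R'] (n : ℕ) (a b : ℕ → ℕ) : Matrix (Fin n) (Fin n) R' :=
  fun i j => h ((a i.1 : ℤ) - (b j.1 : ℤ) - (i.1 : ℤ) + (j.1 : ℤ) - 1)

theorem claim_col (σ : Type) [Fintype σ] [DecidableEq σ] (lam τ : YoungDiagram) {n : ℕ}
    (hn : n = lam.card + τ.card + 2) (j : Fin n) [Decidable (validAdd τ j.1)] :
    (if validAdd τ j.1 then skewSchurPoly σ lam (addBoxAt τ j.1) else 0)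
      = ((JTmat (hPolyZ σ) n lam.rowLen τ.rowLen).updateCol j
          (fun i => JTmatB (hPolyZ σ) n lam.rowLen τ.rowLen i j)).det := by
  by_cases hv : validAdd τ j.1
  · have hcard : lam.card + (addBoxAt τ j.1).card ≤ n := by
      have := card_addBoxAt hv; omega
    rw [if_pos hv, skew_eq_JT σ lam _ hcard]
    congr 1
    refine Matrix.ext fun i j' => ?_
    rw [Matrix.updateCol_apply]
    by_cases hj' : j' = j
    · subst hj'
      rw [if_pos rfl]
      show hPolyZ σ _ = hPolyZ σ _
      rw [rowLen_addBoxAt hv, if_pos rfl]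
      congr 1
      push_cast
      ring
    · rw [if_neg hj']
      show hPolyZ σ _ = hPolyZ σ _
      rw [rowLen_addBoxAt hv, if_neg (fun hc => hj' (Fin.val_injective hc))]
  · rw [if_neg hv]
    rw [validAdd] at hv
    push_neg at hv
    obtain ⟨i0, hi0j, hi0⟩ := hv
    have hj1 : 1 ≤ j.1 := by omega
    have heq : τ.rowLen (j.1 - 1) = τ.rowLen j.1 := by
      have h1 : τ.rowLen (j.1 - 1) ≤ τ.rowLen i0 := τ.rowLen_anti _ _ (by omega)
      have h2 : τ.rowLen j.1 ≤ τ.rowLen (j.1 - 1) := τ.rowLen_anti _ _ (by omega)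
      omega
    have hne : (⟨j.1 - 1, by omega⟩ : Fin n) ≠ j := by
      intro hc
      have := congrArg Fin.val hc
      simp only at this
      omega
    symm
    apply Matrix.det_zero_of_column_eq hne
    intro k
    rw [Matrix.updateCol_apply, Matrix.updateCol_apply, if_pos rfl, if_neg hne]
    show hPolyZ σ _ = hPolyZ σ _
    congr 1
    simp only [JTmat, JTmatB]
    omega

theorem claim_row (σ : Type) [Fintype σ] [DecidableEq σ] (lam τ : YoungDiagram) {n : ℕ}
    (hn : n = lam.card + τ.card + 2) (i : Fin n) [Decidable (validRem lam i.1)] :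
    (if validRem lam i.1 then skewSchurPoly σ (removeBoxAt lam i.1) τ else 0)
      = ((JTmat (hPolyZ σ) n lam.rowLen τ.rowLen).updateRow i
          (JTmatB (hPolyZ σ) n lam.rowLen τ.rowLen i)).det := by
  by_cases hv : validRem lam i.1
  · have hpos : 0 < lam.rowLen i.1 := lt_of_le_of_lt (Nat.zero_le _) hv
    have hcard : (removeBoxAt lam i.1).card + τ.card ≤ n := by
      have := card_removeBoxAt hv; omega
    rw [if_pos hv, skew_eq_JT σ _ τ hcard]
    congr 1
    refine Matrix.ext fun i' j => ?_
    rw [Matrix.updateRow_apply]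
    by_cases hi' : i' = i
    · subst hi'
      rw [if_pos rfl]
      show hPolyZ σ _ = hPolyZ σ _
      rw [rowLen_removeBoxAt hv, if_pos rfl]
      congr 1
      omega
    · rw [if_neg hi']
      show hPolyZ σ _ = hPolyZ σ _
      rw [rowLen_removeBoxAt hv, if_neg (fun hc => hi' (Fin.val_injective hc))]
  · rw [if_neg hv]
    rw [validRem] at hv
    push_neg at hv
    have hle : lam.rowLen (i.1 + 1) ≤ lam.rowLen i.1 := lam.rowLen_anti _ _ (Nat.le_succ _)
    have heq : lam.rowLen (i.1 + 1) = lam.rowLen i.1 := le_antisymm hle hv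
    symm
    rcases Nat.lt_or_ge (i.1 + 1) n with hlt | hge
    · have hne : i ≠ (⟨i.1 + 1, hlt⟩ : Fin n) := by
        intro hc
        have := congrArg Fin.val hc
        simp only at this
        omega
      apply Matrix.det_zero_of_row_eq hne
      rw [Matrix.updateRow_self, Matrix.updateRow_ne (Ne.symm hne)]
      funext j
      show hPolyZ σ _ = hPolyZ σ _
      congr 1
      simp only [JTmat, JTmatB]
      omega
    · have hlam : lam.rowLen i.1 = 0 := rowLen_eq_zero_of_card_le (by omega)
      apply Matrix.det_eq_zero_of_row_eq_zero i
      intro j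
      rw [Matrix.updateRow_self]
      apply hPolyZ_neg
      have hj : j.1 < n := j.2
      omega

theorem key_main (σ : Type) [Fintype σ] [DecidableEq σ] (lam τ : YoungDiagram)
    {S : Type*} [CommRing S] (φ : MvPolynomial σ ℚ →+* S) :
    (∑ᶠ (η : YoungDiagram) (_ : AddBox τ η), φ (skewSchurPoly σ lam η))
      = ∑ᶠ (α : YoungDiagram) (_ : AddBox α lam), φ (skewSchurPoly σ α τ) := by
  classical
  have hbound1 : ∀ j, validAdd τ j → j < lam.card + τ.card + 2 := fun j hj => by
    have := hj.le_card; omega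
  have hbound2 : ∀ i, validRem lam i → i < lam.card + τ.card + 2 := fun i hi => by
    have := hi.lt_card; omega
  rw [finsum_addBox_snd τ (fun η => φ (skewSchurPoly σ lam η)),
    finsum_addBox_fst lam (fun α => φ (skewSchurPoly σ α τ)),
    finsum_cond_nat _ _ (lam.card + τ.card + 2) hbound1,
    finsum_cond_nat _ _ (lam.card + τ.card + 2) hbound2,
    ← Fin.sum_univ_eq_sum_range, ← Fin.sum_univ_eq_sum_range]
  calc ∑ j : Fin (lam.card + τ.card + 2),
        (if validAdd τ j.1 then φ (skewSchurPoly σ lam (addBoxAt τ j.1)) else 0)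
      = ∑ j : Fin (lam.card + τ.card + 2),
          φ (((JTmat (hPolyZ σ) _ lam.rowLen τ.rowLen).updateCol j
            (fun i => JTmatB (hPolyZ σ) _ lam.rowLen τ.rowLen i j)).det) := by
        refine Finset.sum_congr rfl fun j _ => ?_
        rw [← claim_col σ lam τ rfl j, apply_ite φ, map_zero]
    _ = φ (∑ j : Fin (lam.card + τ.card + 2),
          ((JTmat (hPolyZ σ) _ lam.rowLen τ.rowLen).updateCol j
            (fun i => JTmatB (hPolyZ σ) _ lam.rowLen τ.rowLen i j)).det) := (map_sum φ _ _).symm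
    _ = φ (∑ i : Fin (lam.card + τ.card + 2),
          ((JTmat (hPolyZ σ) _ lam.rowLen τ.rowLen).updateRow i
            (JTmatB (hPolyZ σ) _ lam.rowLen τ.rowLen i)).det) := by
        rw [sum_det_updateRow_eq]
    _ = ∑ i : Fin (lam.card + τ.card + 2),
          φ (((JTmat (hPolyZ σ) _ lam.rowLen τ.rowLen).updateRow i
            (JTmatB (hPolyZ σ) _ lam.rowLen τ.rowLen i)).det) := map_sum φ _ _
    _ = ∑ i : Fin (lam.card + τ.card + 2),
          (if validRem lam i.1 then φ (skewSchurPoly σ (removeBoxAt lam i.1) τ) else 0) := by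
        refine Finset.sum_congr rfl fun i _ => ?_
        rw [← claim_row σ lam τ rfl i, apply_ite φ, map_zero]

end Key


section Main

attribute [local instance] Classical.propDecidable

theorem hpull {R' : Type*} [Semiring R'] (W : YoungDiagram → Prop)
    (hW : {d : YoungDiagram | W d}.Finite) (g : YoungDiagram → R') (c : R') :
    ((∑ᶠ (d : YoungDiagram) (_ : W d), g d) * c)
      = ∑ᶠ (d : YoungDiagram) (_ : W d), g d * c := by
  rw [finsum_mul' _ c ?_]
  · apply finsum_congr
    intro d
    rw [finsum_eq_if, finsum_eq_if]
    split_ifs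
    · rfl
    · rw [zero_mul]
  · apply Set.Finite.subset hW
    intro d hd
    by_contra hc
    exact hd (finsum_Prop_of_not hc _)

theorem see_saw_sum' (lam mu : YoungDiagram) (N M : ℕ) :
    (∑ᶠ eta : YoungDiagram, ∑ᶠ (tau : YoungDiagram) (_ : AddBox tau eta),
        MvPolynomial.rename (Sum.inl : Fin N → Fin N ⊕ Fin M)
            (skewSchurPoly (Fin N) lam eta) *
          MvPolynomial.rename (Sum.inr : Fin M → Fin N ⊕ Fin M)
            (skewSchurPoly (Fin M) mu tau)) =
      ∑ᶠ eta : YoungDiagram, ∑ᶠ (alpha : YoungDiagram) (_ : AddBox alpha lam),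
        MvPolynomial.rename (Sum.inl : Fin N → Fin N ⊕ Fin M)
            (skewSchurPoly (Fin N) alpha eta) *
          MvPolynomial.rename (Sum.inr : Fin M → Fin N ⊕ Fin M)
            (skewSchurPoly (Fin M) mu eta) := by
  classical
  set X : YoungDiagram → YoungDiagram → MvPolynomial (Fin N ⊕ Fin M) ℚ := fun p q =>
    MvPolynomial.rename (Sum.inl : Fin N → Fin N ⊕ Fin M) (skewSchurPoly (Fin N) p q) with hX
  set Y : YoungDiagram → MvPolynomial (Fin N ⊕ Fin M) ℚ := fun q =>
    MvPolynomial.rename (Sum.inr : Fin M → Fin N ⊕ Fin M) (skewSchurPoly (Fin M) mu q) with hY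
  have hX0 : ∀ p q : YoungDiagram, ¬ q.cells ⊆ p.cells → X p q = 0 := by
    intro p q hpq
    rw [hX]
    simp only
    rw [skew_eq_zero_of_not_subset _ hpq, map_zero]
  have hY0 : ∀ q : YoungDiagram, ¬ q.cells ⊆ mu.cells → Y q = 0 := by
    intro q hq
    rw [hY]
    simp only
    rw [skew_eq_zero_of_not_subset _ hq, map_zero]
  have hswap : (∑ᶠ eta : YoungDiagram, ∑ᶠ (tau : YoungDiagram) (_ : AddBox tau eta),
        X lam eta * Y tau)
      = ∑ᶠ tau : YoungDiagram, ∑ᶠ (eta : YoungDiagram) (_ : AddBox tau eta),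
        X lam eta * Y tau := by
    apply finsum_swap' (fun eta tau => ∑ᶠ _ : AddBox tau eta, X lam eta * Y tau)
      (finite_subdiagrams lam.cells) (finite_subdiagrams mu.cells)
    intro eta tau hne
    constructor
    · by_contra h0
      apply hne
      rw [hX0 lam eta h0]
      simp only [zero_mul]
      exact finsum_zero
    · by_contra h0
      apply hne
      rw [hY0 tau h0]
      simp only [mul_zero]
      exact finsum_zero
  rw [hswap]
  have hkey : ∀ tau : YoungDiagram,
      (∑ᶠ (eta : YoungDiagram) (_ : AddBox tau eta), X lam eta)
        = ∑ᶠ (alpha : YoungDiagram) (_ : AddBox alpha lam), X alpha tau := by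
    intro tau
    exact key_main (Fin N) lam tau
      ((MvPolynomial.rename (Sum.inl : Fin N → Fin N ⊕ Fin M)).toRingHom)
  calc ∑ᶠ tau : YoungDiagram, ∑ᶠ (eta : YoungDiagram) (_ : AddBox tau eta), X lam eta * Y tau
      = ∑ᶠ tau : YoungDiagram,
          (∑ᶠ (eta : YoungDiagram) (_ : AddBox tau eta), X lam eta) * Y tau := by
        apply finsum_congr
        intro tau
        exact (hpull (fun eta => AddBox tau eta) (finite_addBox_snd tau) _ _).symm
    _ = ∑ᶠ tau : YoungDiagram,
          (∑ᶠ (alpha : YoungDiagram) (_ : AddBox alpha lam), X alpha tau) * Y tau := by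
        apply finsum_congr
        intro tau
        rw [hkey tau]
    _ = ∑ᶠ eta : YoungDiagram, ∑ᶠ (alpha : YoungDiagram) (_ : AddBox alpha lam),
          X alpha eta * Y eta := by
        apply finsum_congr
        intro eta
        exact hpull (fun alpha => AddBox alpha lam) (finite_addBox_fst lam) _ _

end Main


/-- For any partitions `λ, μ` and finite variable sets `x = (x_1,…,x_N)`,
`y = (y_1,…,y_M)`:
`∑_η ∑_{τ∈η−□} s_{λ/η}(x) s_{μ/τ}(y) = ∑_η ∑_{α∈λ−□} s_{α/η}(x) s_{μ/η}(y)`. -/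
theorem see_saw_sum (lam mu : YoungDiagram) (N M : ℕ) :
    (∑ᶠ eta : YoungDiagram, ∑ᶠ (tau : YoungDiagram) (_ : AddBox tau eta),
        MvPolynomial.rename (Sum.inl : Fin N → Fin N ⊕ Fin M)
            (skewSchurPoly (Fin N) lam eta) *
          MvPolynomial.rename (Sum.inr : Fin M → Fin N ⊕ Fin M)
            (skewSchurPoly (Fin M) mu tau)) =
      ∑ᶠ eta : YoungDiagram, ∑ᶠ (alpha : YoungDiagram) (_ : AddBox alpha lam),
        MvPolynomial.rename (Sum.inl : Fin N → Fin N ⊕ Fin M)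
            (skewSchurPoly (Fin N) alpha eta) *
          MvPolynomial.rename (Sum.inr : Fin M → Fin N ⊕ Fin M)
            (skewSchurPoly (Fin M) mu eta) := by
  exact see_saw_sum' lam mu N M

end
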